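/- arXiv:0806.1289 — 2 statements merged into one kernel-verified Lean document; each statement's English description precedes it below -/
import Mathlib

section
/- Let D > 0, R > 0, a > 0, k > 0, 0 < u₀ < 1, and define b₁(T) = D R T/(2 u₀(1-u₀)) - a/2 and β₁(T) = -(π²/L_d²)(π²/L_d² + b₁(T)/k). If 0 < L_d ≤ π·√(2k/a), then β₁(T) < 0 for every temperature T > 0. That is, if the container length is at most the critical length scale L_d^c = π·√(2k/a), then no phase separation occurs at any positive temperature. -/
open Real

/-- If the container length satisfies `0 < L_d ≤ π√(2k/a)` (the critical
length scale `L_d^c`), then the first eigenvalue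
`β₁(T) = -(π²/L_d²)(π²/L_d² + b₁(T)/k)` with `b₁(T) = DRT/(2u₀(1-u₀)) - a/2`
is negative for every temperature `T > 0`: no phase separation occurs. -/
theorem no_phase_separation_below_critical_length
    (D R a k Ld u₀ : ℝ) (hD : 0 < D) (hR : 0 < R) (ha : 0 < a) (hk : 0 < k)
    (hu₀ : u₀ ∈ Set.Ioo (0:ℝ) 1)
    (b₁ β₁ : ℝ → ℝ)
    (hb₁ : ∀ T, b₁ T = D * R * T / (2 * u₀ * (1 - u₀)) - a / 2)
    (hβ₁ : ∀ T, β₁ T = -(π ^ 2 / Ld ^ 2) * (π ^ 2 / Ld ^ 2 + b₁ T / k))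
    (hLd : 0 < Ld) (hLdc : Ld ≤ π * Real.sqrt (2 * k / a)) :
    ∀ T : ℝ, 0 < T → β₁ T < 0 := by
  intro T hT
  obtain ⟨hu0, hu1⟩ := hu₀
  have hpi : (0:ℝ) < π := Real.pi_pos
  have hsq : Ld ^ 2 ≤ π ^ 2 * (2 * k / a) := by
    have h2 : Ld ^ 2 ≤ (π * Real.sqrt (2 * k / a)) ^ 2 :=
      pow_le_pow_left₀ hLd.le hLdc 2
    calc Ld ^ 2 ≤ (π * Real.sqrt (2 * k / a)) ^ 2 := h2
      _ = π ^ 2 * (2 * k / a) := by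
          rw [mul_pow, Real.sq_sqrt (by positivity)]
  have hkey : a / (2 * k) ≤ π ^ 2 / Ld ^ 2 := by
    rw [div_le_div_iff₀ (by positivity) (by positivity)]
    have h3 : a * Ld ^ 2 ≤ a * (π ^ 2 * (2 * k / a)) :=
      mul_le_mul_of_nonneg_left hsq ha.le
    have h4 : a * (π ^ 2 * (2 * k / a)) = π ^ 2 * (2 * k) := by
      field_simp
    linarith
  have hb : -(a / 2) < b₁ T := by
    rw [hb₁]
    have h1u : 0 < 1 - u₀ := by linarith
    have : 0 < D * R * T / (2 * u₀ * (1 - u₀)) := by positivity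
    linarith
  have hbk : 0 < b₁ T / k + a / (2 * k) := by
    have h1 : b₁ T / k + a / (2 * k) = (b₁ T + a / 2) / k := by
      field_simp
    rw [h1]
    exact div_pos (by linarith) hk
  have hsum : 0 < π ^ 2 / Ld ^ 2 + b₁ T / k := by linarith
  have hP : 0 < π ^ 2 / Ld ^ 2 := by positivity
  rw [hβ₁]
  nlinarith [mul_pos hP hsum]
end

section
/- Let D > 0, R > 0, T > 0, k > 0 and L_d > 0 be fixed, and define K_d(u₀) = (2L_d²/(9π²))·(b₂(u₀)²/k) - b₃(u₀) for u₀ ∈ (0,1), where b₂(u₀) = D R T (2u₀-1)/(6u₀²(1-u₀)²) and b₃(u₀) = D R T (1-3u₀+3u₀²)/(12u₀³(1-u₀)³). Then there exists δ > 0 such that K_d(u₀) > 0 for all u₀ ∈ (0,δ) and for all u₀ ∈ (1-δ,1). That is, for molar fractions sufficiently close to 0 or 1 the phase separation is first-order with latent heat. -/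
open Real

lemma kd_key (D R T k Ld : ℝ) (hD : 0 < D) (hR : 0 < R) (hT : 0 < T) (hk : 0 < k)
    (hLd : 0 < Ld) (b₂ b₃ Kd : ℝ → ℝ)
    (hb₂ : ∀ u₀, b₂ u₀ = D * R * T * (2 * u₀ - 1) / (6 * u₀ ^ 2 * (1 - u₀) ^ 2))
    (hb₃ : ∀ u₀, b₃ u₀ = D * R * T * (1 - 3 * u₀ + 3 * u₀ ^ 2) / (12 * u₀ ^ 3 * (1 - u₀) ^ 3))
    (hKd : ∀ u₀, Kd u₀ = 2 * Ld ^ 2 / (9 * π ^ 2) * ((b₂ u₀) ^ 2 / k) - b₃ u₀)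
    (u : ℝ) (hu0 : 0 < u) (hu1 : u < 1) (hsq : (1:ℝ)/4 ≤ (2 * u - 1) ^ 2)
    (hsmall : u * (1 - u) < Ld ^ 2 * (D * R * T) / (54 * π ^ 2 * k)) :
    0 < Kd u := by
  have hpi : 0 < π := Real.pi_pos
  have h1u : 0 < 1 - u := by linarith
  set A := D * R * T with hA
  have hApos : 0 < A := by positivity
  have heq : Kd u = (2 * Ld ^ 2 * A ^ 2 * (2 * u - 1) ^ 2
      - 27 * π ^ 2 * k * A * (1 - 3 * u + 3 * u ^ 2) * (u * (1 - u)))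
      / (324 * π ^ 2 * k * u ^ 4 * (1 - u) ^ 4) := by
    rw [hKd, hb₂, hb₃]
    field_simp
    ring
  rw [heq]
  apply div_pos
  · have hq : 0 < 1 - 3 * u + 3 * u ^ 2 := by nlinarith
    have hq1 : 1 - 3 * u + 3 * u ^ 2 ≤ 1 := by nlinarith
    have hmul : 27 * π ^ 2 * k * A * (1 - 3 * u + 3 * u ^ 2) * (u * (1 - u))
        ≤ 27 * π ^ 2 * k * A * (u * (1 - u)) := by
      have h0 : 0 < u * (1 - u) := by positivity
      nlinarith [mul_pos (mul_pos (mul_pos (by positivity : (0:ℝ) < 27 * π ^ 2) hk) hApos) h0]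
    have h54 : 0 < 54 * π ^ 2 * k := by positivity
    have hbound : 27 * π ^ 2 * k * A * (u * (1 - u)) < Ld ^ 2 * A ^ 2 / 2 := by
      have := (mul_lt_mul_of_pos_left hsmall (by positivity : (0:ℝ) < 27 * π ^ 2 * k * A))
      calc 27 * π ^ 2 * k * A * (u * (1 - u))
          < 27 * π ^ 2 * k * A * (Ld ^ 2 * A / (54 * π ^ 2 * k)) := this
        _ = Ld ^ 2 * A ^ 2 / 2 := by field_simp; ring
    have hlhs : Ld ^ 2 * A ^ 2 / 2 ≤ 2 * Ld ^ 2 * A ^ 2 * (2 * u - 1) ^ 2 := by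
      nlinarith [mul_pos (mul_pos hLd hLd) (mul_pos hApos hApos)]
    linarith
  · positivity

/-- For fixed `D, R, T, k, L_d > 0`, the Case I transition-order
parameter `K_d(u₀) = (2L_d²/(9π²))(b₂(u₀)²/k) - b₃(u₀)` (with `b₂, b₃` from the
Hildebrand free energy) is positive for all molar fractions `u₀` sufficiently close
to `0` or to `1`: the separation is first-order with latent heat near the endpoints. -/
theorem first_order_near_endpoints
    (D R T k Ld : ℝ) (hD : 0 < D) (hR : 0 < R) (hT : 0 < T) (hk : 0 < k) (hLd : 0 < Ld)
    (b₂ b₃ Kd : ℝ → ℝ)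
    (hb₂ : ∀ u₀, b₂ u₀ = D * R * T * (2 * u₀ - 1) / (6 * u₀ ^ 2 * (1 - u₀) ^ 2))
    (hb₃ : ∀ u₀, b₃ u₀ = D * R * T * (1 - 3 * u₀ + 3 * u₀ ^ 2) / (12 * u₀ ^ 3 * (1 - u₀) ^ 3))
    (hKd : ∀ u₀, Kd u₀ = 2 * Ld ^ 2 / (9 * π ^ 2) * ((b₂ u₀) ^ 2 / k) - b₃ u₀) :
    ∃ δ > 0, (∀ u₀ ∈ Set.Ioo (0:ℝ) δ, 0 < Kd u₀) ∧
             (∀ u₀ ∈ Set.Ioo (1 - δ) (1:ℝ), 0 < Kd u₀) := by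
  have hpi : 0 < π := Real.pi_pos
  set B := Ld ^ 2 * (D * R * T) / (54 * π ^ 2 * k) with hB
  have hBpos : 0 < B := by positivity
  refine ⟨min (1/4) B, lt_min (by norm_num) hBpos, ?_, ?_⟩
  · rintro u ⟨hu0, hu⟩
    have hu4 : u < 1/4 := lt_of_lt_of_le hu (min_le_left _ _)
    have huB : u < B := lt_of_lt_of_le hu (min_le_right _ _)
    have hu1 : u < 1 := by linarith
    refine kd_key D R T k Ld hD hR hT hk hLd b₂ b₃ Kd hb₂ hb₃ hKd u hu0 hu1 ?_ ?_
    · nlinarith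
    · have : u * (1 - u) < u := by nlinarith
      linarith
  · rintro u ⟨hu, hu1⟩
    have hu4 : 1 - 1/4 < u := by
      have := min_le_left (1/4 : ℝ) B; linarith
    have huB : 1 - B < u := by
      have := min_le_right (1/4 : ℝ) B; linarith
    have hu0 : 0 < u := by linarith
    refine kd_key D R T k Ld hD hR hT hk hLd b₂ b₃ Kd hb₂ hb₃ hKd u hu0 hu1 ?_ ?_
    · nlinarith
    · have : u * (1 - u) < 1 - u := by nlinarith
      linarith
end
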